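/- arXiv:1612.00187 — 3 statements merged into one kernel-verified Lean document; each statement's English description precedes it below -/
import Mathlib

section
/- Let λ = (λ₁,…,λₙ) ∈ ℂⁿ with |λ_j| = 1 for all j, and let ρ : ℂⁿ → ℂⁿ be the map ρ(z)_j = λ_j z_j. Let U ⊆ ℂⁿ be an open connected set containing 0 that is invariant under every rotation ρ_α (α ∈ ℝⁿ). Let χ : U → ℝⁿ be continuously differentiable (viewing ℂⁿ as ℝ^{2n}) with χ(0) = 0, and let L : ℝⁿ × ℝⁿ → ℝ be continuously differentiable. Assume that for every z ∈ U the linear functional (∂₂L(χ(ρ⁻¹z), χ(z)) + ∂₁L(χ(z), χ(ρz)))ᵀ ∘ Dχ(z) on ℝ^{2n} is zero, where Dχ(z) is the (real) derivative of χ at z. Then for every z ∈ U, (2π)^{−n} ∫_{[0,2π]ⁿ} L(χ(ρ_α z), χ(ρ(ρ_α z))) dα = L(0,0). -/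
open MeasureTheory
open Set Metric

/-- The torus rotation `ρ_α : ℂⁿ → ℂⁿ`, `(ρ_α z)_j = e^{iα_j} z_j`. -/
noncomputable def rotAct {n : ℕ} (α : Fin n → ℝ) (z : Fin n → ℂ) : Fin n → ℂ :=
  fun j => Complex.exp ((α j : ℂ) * Complex.I) * z j

/-- The box `[0,2π]ⁿ ⊆ ℝⁿ`. -/
def torusBox (n : ℕ) : Set (Fin n → ℝ) :=
  Set.univ.pi fun _ => Set.Icc (0 : ℝ) (2 * Real.pi)

noncomputable def diagCLM {n : ℕ} (c : Fin n → ℂ) : (Fin n → ℂ) →L[ℝ] (Fin n → ℂ) :=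
  ∑ j, c j • ((ContinuousLinearMap.pi fun k =>
      if k = j then (ContinuousLinearMap.id ℝ ℂ) else 0).comp (ContinuousLinearMap.proj j))

lemma diagCLM_apply {n : ℕ} (c : Fin n → ℂ) (z : Fin n → ℂ) :
    diagCLM c z = fun j => c j * z j := by
  funext k
  simp only [diagCLM, ContinuousLinearMap.sum_apply, Finset.sum_apply,
    ContinuousLinearMap.smul_apply, ContinuousLinearMap.comp_apply,
    ContinuousLinearMap.proj_apply, ContinuousLinearMap.pi_apply, Pi.smul_apply, smul_eq_mul]
  rw [Finset.sum_eq_single k]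
  · simp
  · intro b _ hb; simp [Ne.symm hb]
  · simp

lemma continuous_diagCLM {n : ℕ} : Continuous fun c : Fin n → ℂ => diagCLM c := by
  unfold diagCLM
  exact continuous_finset_sum _ fun j _ => (continuous_apply j).smul continuous_const

lemma ContinuousOn.clm_prod' {X : Type*} [TopologicalSpace X] {E F G : Type*}
    [NormedAddCommGroup E] [NormedSpace ℝ E] [NormedAddCommGroup F] [NormedSpace ℝ F]
    [NormedAddCommGroup G] [NormedSpace ℝ G] {f : X → E →L[ℝ] F} {g : X → E →L[ℝ] G}
    {s : Set X} (hf : ContinuousOn f s) (hg : ContinuousOn g s) :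
    ContinuousOn (fun x => (f x).prod (g x)) s := by
  have h : (fun x => (f x).prod (g x)) = fun x =>
      (ContinuousLinearMap.inl ℝ F G).comp (f x) + (ContinuousLinearMap.inr ℝ F G).comp (g x) := by
    funext x; ext v <;> simp
  rw [h]
  exact (continuousOn_const.clm_comp hf).add (continuousOn_const.clm_comp hg)


lemma pi_restrict_eq {ι : Type*} [Fintype ι] (s : ι → Set ℝ) (_hs : ∀ i, MeasurableSet (s i)) :
    Measure.pi (fun i : ι => (volume : Measure ℝ).restrict (s i)) =
      (volume : Measure (ι → ℝ)).restrict (Set.univ.pi s) := by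
  refine Measure.pi_eq (μ := fun i => (volume : Measure ℝ).restrict (s i)) fun t ht => ?_
  rw [Measure.restrict_apply (MeasurableSet.univ_pi ht), ← Set.pi_inter_distrib,
    volume_pi_pi]
  exact Finset.prod_congr rfl fun i _ => (Measure.restrict_apply (ht i)).symm

lemma torus_integral_translate {n : ℕ} (f : (Fin n → AddCircle (2 * Real.pi)) → ℝ)
    (hf : Continuous f) (β : Fin n → ℝ) :
    (∫ α in torusBox n, f fun j => (↑(α j + β j) : AddCircle (2 * Real.pi))) =
      ∫ α in torusBox n, f fun j => (↑(α j) : AddCircle (2 * Real.pi)) := by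
  haveI : Fact (0 < 2 * Real.pi) := ⟨by positivity⟩
  have hbox : (Set.univ.pi fun _ : Fin n => Set.Ioc (0:ℝ) (2 * Real.pi)) =ᵐ[volume]
      torusBox n := by
    have h1 : torusBox n = Set.Icc (fun _ : Fin n => (0:ℝ)) (fun _ => 2 * Real.pi) := by
      rw [← Set.pi_univ_Icc]; rfl
    rw [h1, show (volume : Measure (Fin n → ℝ)) = Measure.pi fun _ => volume from volume_pi]
    exact Measure.univ_pi_Ioc_ae_eq_Icc
  have key : ∀ g : (Fin n → AddCircle (2 * Real.pi)) → ℝ, Continuous g →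
      (∫ α in torusBox n, g fun j => (↑(α j) : AddCircle (2 * Real.pi)))
        = ∫ x, g x := by
    intro g hg
    have hmp : MeasurePreserving (fun (α : Fin n → ℝ) (j : Fin n) =>
        (↑(α j) : AddCircle (2 * Real.pi)))
        (volume.restrict (Set.univ.pi fun _ => Set.Ioc 0 (2 * Real.pi))) volume := by
      have h := measurePreserving_pi (fun _ : Fin n => (volume : Measure ℝ).restrict
          (Set.Ioc 0 (0 + 2 * Real.pi))) (fun _ => (volume : Measure (AddCircle (2 * Real.pi))))
          (fun _ => AddCircle.measurePreserving_mk _ 0)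
      rwa [zero_add, pi_restrict_eq _ (fun _ => measurableSet_Ioc),
        ← volume_pi] at h
    rw [← setIntegral_congr_set hbox, ← hmp.map_eq,
      integral_map hmp.measurable.aemeasurable hg.aestronglyMeasurable]
  have hco : ∀ α : Fin n → ℝ, (fun j => (↑(α j + β j) : AddCircle (2 * Real.pi)))
      = (fun j => (↑(α j) : AddCircle (2 * Real.pi))) + (fun j => (↑(β j) : AddCircle (2 * Real.pi))) := by
    intro α; funext j; simp
  calc (∫ α in torusBox n, f fun j => (↑(α j + β j) : AddCircle (2 * Real.pi)))
      = ∫ α in torusBox n, (fun x => f (x + fun j => (↑(β j) : AddCircle (2*Real.pi))))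
          (fun j => (↑(α j) : AddCircle (2 * Real.pi))) := by
        refine setIntegral_congr_fun ?_ fun α _ => ?_
        · exact MeasurableSet.univ_pi fun _ => measurableSet_Icc
        · rw [hco α]
    _ = ∫ x, f (x + fun j => (↑(β j) : AddCircle (2*Real.pi))) :=
        key _ (hf.comp (continuous_id.add continuous_const))
    _ = ∫ x, f x := by
        simp_rw [fun x => add_comm x (fun j => (↑(β j) : AddCircle (2*Real.pi)))]
        exact integral_add_left_eq_self f _
    _ = ∫ α in torusBox n, f fun j => (↑(α j) : AddCircle (2 * Real.pi)) := (key f hf).symm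


set_option maxHeartbeats 2000000 in
/-- Let `|λ_j| = 1` for all `j` and `ρ(z)_j = λ_j z_j`. Let `U ⊆ ℂⁿ` be an
open connected rotation-invariant neighborhood of `0`, `χ : U → ℝⁿ` be `C¹` (over `ℝ`) with
`χ(0) = 0`, and `L : ℝⁿ × ℝⁿ → ℝ` be `C¹`. If for every `z ∈ U` the linear functional
`(∂₂L(χ(ρ⁻¹z), χ(z)) + ∂₁L(χ(z), χ(ρz)))ᵀ ∘ Dχ(z)` vanishes (expressed below by evaluating
the full derivative of `L` on `(0, Dχ(z)v)` resp. `(Dχ(z)v, 0)`), then for every `z ∈ U`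
the torus average `(2π)⁻ⁿ ∫_{[0,2π]ⁿ} L(χ(ρ_α z), χ(ρ(ρ_α z))) dα` equals `L(0,0)`. -/
theorem statement5 (n : ℕ) (lam : Fin n → ℂ) (hmod : ∀ j, ‖lam j‖ = 1)
    (U : Set (Fin n → ℂ)) (hUopen : IsOpen U) (hUconn : IsConnected U) (hU0 : 0 ∈ U)
    (hUinv : ∀ (α : Fin n → ℝ) (z : Fin n → ℂ), z ∈ U → rotAct α z ∈ U)
    (χ : (Fin n → ℂ) → (Fin n → ℝ)) (hχ : ContDiffOn ℝ 1 χ U) (hχ0 : χ 0 = 0)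
    (L : (Fin n → ℝ) × (Fin n → ℝ) → ℝ) (hL : ContDiff ℝ 1 L)
    (heq : ∀ z ∈ U, ∀ v : Fin n → ℂ,
      fderiv ℝ L (χ (fun j => (lam j)⁻¹ * z j), χ z) (0, fderiv ℝ χ z v) +
        fderiv ℝ L (χ z, χ (fun j => lam j * z j)) (fderiv ℝ χ z v, 0) = 0) :
    ∀ z ∈ U,
      ((2 * Real.pi) ^ n)⁻¹ *
          (∫ α in torusBox n,
            L (χ (rotAct α z), χ (fun j => lam j * rotAct α z j))) = L (0, 0) := by
  have hlamne : ∀ j, lam j ≠ 0 := fun j h => by have hh := hmod j; rw [h] at hh; simp at hh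
  set β : Fin n → ℝ := fun j => Complex.arg (lam j) with hβ
  have hlamβ : ∀ j, Complex.exp ((β j : ℂ) * Complex.I) = lam j := by
    intro j
    have h := Complex.norm_mul_exp_arg_mul_I (lam j)
    rwa [hmod j, Complex.ofReal_one, one_mul] at h
  set A : (Fin n → ℝ) → ((Fin n → ℂ) →L[ℝ] (Fin n → ℂ)) :=
    fun α => diagCLM (fun j => Complex.exp ((α j : ℂ) * Complex.I)) with hA
  set R : (Fin n → ℂ) →L[ℝ] (Fin n → ℂ) := diagCLM lam with hRdef
  have hAapp : ∀ (α : Fin n → ℝ) (x : Fin n → ℂ), A α x = rotAct α x := by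
    intro α x; rw [hA]; rw [diagCLM_apply]; rfl
  have hRapp : ∀ x : Fin n → ℂ, R x = fun j => lam j * x j := by
    intro x; rw [hRdef, diagCLM_apply]
  have hAmem : ∀ (α : Fin n → ℝ) (x : Fin n → ℂ), x ∈ U → A α x ∈ U := by
    intro α x hx; rw [hAapp]; exact hUinv α x hx
  have hRrot : ∀ x : Fin n → ℂ, R x = rotAct β x := by
    intro x; rw [hRapp]; funext j; rw [rotAct, hlamβ j]
  have hRmem : ∀ x ∈ U, R x ∈ U := by
    intro x hx; rw [hRrot]; exact hUinv β x hx
  have hInvrot : ∀ x : Fin n → ℂ, (fun j => (lam j)⁻¹ * x j) = rotAct (-β) x := by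
    intro x; funext j
    rw [rotAct]
    have : ((((-β) j : ℝ)) : ℂ) * Complex.I = -(((β j : ℝ) : ℂ) * Complex.I) := by
      rw [Pi.neg_apply, Complex.ofReal_neg]; ring
    rw [this, Complex.exp_neg, hlamβ j]
  have hInvmem : ∀ x ∈ U, (fun j => (lam j)⁻¹ * x j) ∈ U := by
    intro x hx; rw [hInvrot]; exact hUinv (-β) x hx
  have hRA : ∀ (α : Fin n → ℝ) (x : Fin n → ℂ), R (A α x) = A (α + β) x := by
    intro α x
    rw [hRapp, hAapp, hAapp]
    funext j
    show lam j * rotAct α x j = rotAct (α + β) x j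
    rw [rotAct, rotAct, ← hlamβ j, ← mul_assoc, ← Complex.exp_add]
    congr 1
    rw [Pi.add_apply, Complex.ofReal_add]
    ring
  -- continuity and differentiability facts
  have hχcont : ContinuousOn χ U := hχ.continuousOn
  have hDχcont : ContinuousOn (fderiv ℝ χ) U :=
    hχ.continuousOn_fderiv_of_isOpen hUopen le_rfl
  have hχdiff : ∀ w ∈ U, DifferentiableAt ℝ χ w := fun w hw =>
    (hχ.contDiffAt (hUopen.mem_nhds hw)).differentiableAt one_ne_zero
  have hDLcont : Continuous (fderiv ℝ L) := hL.continuous_fderiv one_ne_zero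
  have hLdiff : Differentiable ℝ L := hL.differentiable one_ne_zero
  have hAcont : Continuous A := by
    apply continuous_diagCLM.comp
    exact continuous_pi fun j =>
      (Complex.continuous_ofReal.comp (continuous_apply j)).mul continuous_const |>.cexp
  -- the functions
  set F : (Fin n → ℂ) → (Fin n → ℝ) → ℝ :=
    fun x α => L (χ (A α x), χ (R (A α x))) with hF
  set F' : (Fin n → ℂ) → (Fin n → ℝ) → ((Fin n → ℂ) →L[ℝ] ℝ) := fun x α =>
    (fderiv ℝ L (χ (A α x), χ (R (A α x)))).comp
      ((((fderiv ℝ χ (A α x)).comp (A α)).prod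
        ((fderiv ℝ χ (R (A α x))).comp (R.comp (A α))))) with hF'
  set K : (Fin n → ℂ) → (Fin n → ℂ) → ℝ := fun w u =>
    fderiv ℝ L (χ fun j => (lam j)⁻¹ * w j, χ w) (0, fderiv ℝ χ w u) with hK
  set Φ : (Fin n → ℂ) → ℝ := fun w =>
    ∫ α in torusBox n, L (χ (rotAct α w), χ fun j => lam j * rotAct α w j) with hΦ
  have hΦF : ∀ x : Fin n → ℂ, Φ x = ∫ α in torusBox n, F x α := by
    intro x
    rw [hΦ]
    refine integral_congr_ae (Filter.Eventually.of_forall fun α => ?_)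
    rw [hF]
    simp only
    rw [hAapp, hRapp]
  -- joint continuity of F'
  have hpaircont : Continuous fun p : (Fin n → ℂ) × (Fin n → ℝ) => A p.2 p.1 :=
    (hAcont.comp continuous_snd).clm_apply continuous_fst
  have hpairmem : ∀ p : (Fin n → ℂ) × (Fin n → ℝ), p ∈ U ×ˢ (univ : Set (Fin n → ℝ)) →
      A p.2 p.1 ∈ U := fun p hp => hAmem p.2 p.1 hp.1
  have hRpaircont : Continuous fun p : (Fin n → ℂ) × (Fin n → ℝ) => R (A p.2 p.1) :=
    R.continuous.comp hpaircont
  have hRpairmem : ∀ p : (Fin n → ℂ) × (Fin n → ℝ), p ∈ U ×ˢ (univ : Set (Fin n → ℝ)) →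
      R (A p.2 p.1) ∈ U := fun p hp => hRmem _ (hpairmem p hp)
  have hF'cont : ContinuousOn (fun p : (Fin n → ℂ) × (Fin n → ℝ) => F' p.1 p.2)
      (U ×ˢ (univ : Set (Fin n → ℝ))) := by
    have c1 : ContinuousOn (fun p : (Fin n → ℂ) × (Fin n → ℝ) =>
        fderiv ℝ L (χ (A p.2 p.1), χ (R (A p.2 p.1)))) (U ×ˢ (univ : Set (Fin n → ℝ))) := by
      apply hDLcont.comp_continuousOn
      exact (hχcont.comp hpaircont.continuousOn hpairmem).prodMk
        (hχcont.comp hRpaircont.continuousOn hRpairmem)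
    have c2 : ContinuousOn (fun p : (Fin n → ℂ) × (Fin n → ℝ) =>
        (fderiv ℝ χ (A p.2 p.1)).comp (A p.2)) (U ×ˢ (univ : Set (Fin n → ℝ))) :=
      (hDχcont.comp hpaircont.continuousOn hpairmem).clm_comp
        ((hAcont.comp continuous_snd).continuousOn)
    have c3 : ContinuousOn (fun p : (Fin n → ℂ) × (Fin n → ℝ) =>
        (fderiv ℝ χ (R (A p.2 p.1))).comp (R.comp (A p.2)))
        (U ×ˢ (univ : Set (Fin n → ℝ))) :=
      (hDχcont.comp hRpaircont.continuousOn hRpairmem).clm_comp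
        ((continuous_const.clm_comp (hAcont.comp continuous_snd)).continuousOn)
    exact c1.clm_comp (c2.clm_prod' c3)
  -- continuity of K
  have hKcont : ContinuousOn (fun p : (Fin n → ℂ) × (Fin n → ℂ) => K p.1 p.2)
      (U ×ˢ (univ : Set (Fin n → ℂ))) := by
    have hInvcont : Continuous fun p : (Fin n → ℂ) × (Fin n → ℂ) =>
        (fun j => (lam j)⁻¹ * p.1 j) := by
      exact continuous_pi fun j => continuous_const.mul ((continuous_apply j).comp continuous_fst)
    have cK1 : ContinuousOn (fun p : (Fin n → ℂ) × (Fin n → ℂ) =>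
        fderiv ℝ L (χ fun j => (lam j)⁻¹ * p.1 j, χ p.1)) (U ×ˢ (univ : Set (Fin n → ℂ))) := by
      apply hDLcont.comp_continuousOn
      refine (hχcont.comp hInvcont.continuousOn fun p hp => hInvmem _ hp.1).prodMk
        (hχcont.comp continuous_fst.continuousOn fun p hp => hp.1)
    have cK2 : ContinuousOn (fun p : (Fin n → ℂ) × (Fin n → ℂ) =>
        (fderiv ℝ χ p.1) p.2) (U ×ˢ (univ : Set (Fin n → ℂ))) :=
      (hDχcont.comp continuous_fst.continuousOn fun p hp => hp.1).clm_apply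
        continuous_snd.continuousOn
    exact cK1.clm_apply (continuousOn_const.prodMk cK2)
  -- derivative of F in x
  have hFderiv : ∀ (α : Fin n → ℝ), ∀ x ∈ U, HasFDerivAt (fun y => F y α) (F' x α) x := by
    intro α x hx
    have hAx : A α x ∈ U := hAmem α x hx
    have hRAx : R (A α x) ∈ U := hRmem _ hAx
    have h1 : HasFDerivAt (fun y => χ (A α y)) ((fderiv ℝ χ (A α x)).comp (A α)) x :=
      ((hχdiff _ hAx).hasFDerivAt).comp x ((A α).hasFDerivAt)
    have h2 : HasFDerivAt (fun y => χ (R (A α y)))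
        ((fderiv ℝ χ (R (A α x))).comp (R.comp (A α))) x :=
      ((hχdiff _ hRAx).hasFDerivAt).comp x ((R.comp (A α)).hasFDerivAt)
    exact ((hLdiff _).hasFDerivAt).comp x (h1.prodMk h2)
  -- key pointwise formula
  have hKval : ∀ x ∈ U, ∀ (α : Fin n → ℝ) (v : Fin n → ℂ),
      F' x α v = K (A (α + β) x) (A (α + β) v) - K (A α x) (A α v) := by
    intro x hx α v
    have hw : A α x ∈ U := hAmem α x hx
    have hsplit : F' x α v =
        fderiv ℝ L (χ (A α x), χ (R (A α x))) (fderiv ℝ χ (A α x) (A α v), 0) +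
        fderiv ℝ L (χ (A α x), χ (R (A α x))) (0, fderiv ℝ χ (R (A α x)) (R (A α v))) := by
      rw [hF']
      simp only [ContinuousLinearMap.comp_apply, ContinuousLinearMap.prod_apply]
      rw [← map_add]
      congr 1
      simp
    have hterm1 : fderiv ℝ L (χ (A α x), χ (R (A α x))) (fderiv ℝ χ (A α x) (A α v), 0) =
        -(K (A α x) (A α v)) := by
      have h := heq (A α x) hw (A α v)
      rw [← hRapp (A α x)] at h
      rw [hK]
      simp only
      linarith
    have hterm2 : fderiv ℝ L (χ (A α x), χ (R (A α x))) (0, fderiv ℝ χ (R (A α x)) (R (A α v))) =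
        K (R (A α x)) (R (A α v)) := by
      rw [hK]
      simp only
      have hinv : (fun j => (lam j)⁻¹ * (R (A α x)) j) = A α x := by
        funext j
        rw [hRapp]
        exact inv_mul_cancel_left₀ (hlamne j) _
      rw [hinv]
    rw [hsplit, hterm1, hterm2, hRA, hRA]
    ring
  -- continuity of F and K along rotations
  have hFcontα : ∀ x ∈ U, Continuous fun α => F x α := by
    intro x hx
    have hAx : Continuous fun α : Fin n → ℝ => A α x := hAcont.clm_apply continuous_const
    have h1 : Continuous fun α : Fin n → ℝ => χ (A α x) :=
      hχcont.comp_continuous hAx fun α => hAmem α x hx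
    have h2 : Continuous fun α : Fin n → ℝ => χ (R (A α x)) :=
      hχcont.comp_continuous (R.continuous.comp hAx) fun α => hRmem _ (hAmem α x hx)
    exact hL.continuous.comp (h1.prodMk h2)
  -- box facts
  have hboxm : MeasurableSet (torusBox n) := MeasurableSet.univ_pi fun _ => measurableSet_Icc
  have hboxc : IsCompact (torusBox n) := isCompact_univ_pi fun _ => isCompact_Icc
  -- the zero-derivative statement
  have hderiv : ∀ w ∈ U, HasFDerivAt Φ (0 : (Fin n → ℂ) →L[ℝ] ℝ) w := by
    intro z₀ hz₀
    obtain ⟨ε₀, hε₀pos, hε₀⟩ := Metric.isOpen_iff.1 hUopen z₀ hz₀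
    set ε := ε₀ / 2 with hεdef
    have hεpos : 0 < ε := by positivity
    have hballU : closedBall z₀ ε ⊆ U := fun y hy =>
      hε₀ (lt_of_le_of_lt (mem_closedBall.1 hy) (by rw [hεdef]; linarith))
    have hF_meas : ∀ᶠ x in nhds z₀, AEStronglyMeasurable (F x) (volume.restrict (torusBox n)) := by
      filter_upwards [hUopen.mem_nhds hz₀] with x hx
      exact (hFcontα x hx).aestronglyMeasurable
    have hF_int : IntegrableOn (F z₀) (torusBox n) volume :=
      ((hFcontα z₀ hz₀).continuousOn).integrableOn_compact hboxc
    have hF'z₀cont : Continuous fun α => F' z₀ α := by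
      have := hF'cont.comp_continuous (continuous_const.prodMk continuous_id)
        (fun α => ⟨hz₀, mem_univ α⟩)
      exact this
    have hF'_meas : AEStronglyMeasurable (fun α => F' z₀ α) (volume.restrict (torusBox n)) :=
      hF'z₀cont.aestronglyMeasurable
    obtain ⟨M, hM⟩ : ∃ M, ∀ p ∈ closedBall z₀ ε ×ˢ torusBox n, ‖F' p.1 p.2‖ ≤ M := by
      apply IsCompact.exists_bound_of_continuousOn ((isCompact_closedBall z₀ ε).prod hboxc)
      exact hF'cont.mono (Set.prod_mono hballU (subset_univ _))
    have h_bound : ∀ᵐ α ∂(volume.restrict (torusBox n)), ∀ x ∈ ball z₀ ε, ‖F' x α‖ ≤ M := by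
      refine (ae_restrict_iff' hboxm).2 (Filter.Eventually.of_forall fun α hα x hx => ?_)
      exact hM (x, α) ⟨ball_subset_closedBall hx, hα⟩
    have hbound_int : Integrable (fun _ : Fin n → ℝ => M) (volume.restrict (torusBox n)) := by
      exact integrableOn_const hboxc.measure_lt_top.ne
    have h_diff : ∀ᵐ α ∂(volume.restrict (torusBox n)), ∀ x ∈ ball z₀ ε,
        HasFDerivAt (fun y => F y α) (F' x α) x :=
      Filter.Eventually.of_forall fun α x hx =>
        hFderiv α x (hballU (ball_subset_closedBall hx))
    have Hmain := hasFDerivAt_integral_of_dominated_of_fderiv_le (ball_mem_nhds z₀ hεpos) hF_meas hF_int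
      hF'_meas h_bound hbound_int h_diff
    -- show the integral of F' vanishes
    have hF'int : Integrable (fun α => F' z₀ α) (volume.restrict (torusBox n)) :=
      hF'z₀cont.continuousOn.integrableOn_compact hboxc
    have hKAcont : ∀ v : Fin n → ℂ, Continuous fun α : Fin n → ℝ => K (A α z₀) (A α v) := by
      intro v
      have hgc : Continuous fun α : Fin n → ℝ =>
          ((A α z₀, A α v) : (Fin n → ℂ) × (Fin n → ℂ)) :=
        (hAcont.clm_apply continuous_const).prodMk (hAcont.clm_apply continuous_const)
      exact hKcont.comp_continuous hgc fun α => ⟨hAmem α z₀ hz₀, mem_univ _⟩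
    have hzero : (∫ α in torusBox n, F' z₀ α) = 0 := by
      refine ContinuousLinearMap.ext fun v => ?_
      rw [ContinuousLinearMap.integral_apply hF'int]
      simp only [ContinuousLinearMap.zero_apply]
      have hrw : ∀ α : Fin n → ℝ, F' z₀ α v =
          K (A (α + β) z₀) (A (α + β) v) - K (A α z₀) (A α v) := fun α => hKval z₀ hz₀ α v
      rw [show (fun α => F' z₀ α v) = fun α =>
        K (A (α + β) z₀) (A (α + β) v) - K (A α z₀) (A α v) from funext hrw]
      have hint2 : IntegrableOn (fun α => K (A α z₀) (A α v)) (torusBox n) volume :=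
        (hKAcont v).continuousOn.integrableOn_compact hboxc
      have hint1 : IntegrableOn (fun α => K (A (α + β) z₀) (A (α + β) v)) (torusBox n) volume := by
        have : Continuous fun α : Fin n → ℝ => K (A (α + β) z₀) (A (α + β) v) :=
          (hKAcont v).comp (continuous_id.add continuous_const)
        exact this.continuousOn.integrableOn_compact hboxc
      rw [integral_sub hint1 hint2]
      -- translation invariance via the torus
      have hiff : (∫ α in torusBox n, K (A (α + β) z₀) (A (α + β) v)) =
          ∫ α in torusBox n, K (A α z₀) (A α v) := by
        set hbar : (Fin n → AddCircle (2 * Real.pi)) → ℝ := fun x =>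
          K (fun j => ((AddCircle.toCircle (x j) : Circle) : ℂ) * z₀ j)
            (fun j => ((AddCircle.toCircle (x j) : Circle) : ℂ) * v j) with hhbar
        have hmemU : ∀ x : Fin n → AddCircle (2 * Real.pi),
            (fun j => ((AddCircle.toCircle (x j) : Circle) : ℂ) * z₀ j) ∈ U := by
          intro x
          have : (fun j => ((AddCircle.toCircle (x j) : Circle) : ℂ) * z₀ j) =
              rotAct (fun j => Complex.arg ((AddCircle.toCircle (x j) : Circle) : ℂ)) z₀ := by
            funext j
            rw [rotAct]
            congr 1
            have h := Complex.norm_mul_exp_arg_mul_I ((AddCircle.toCircle (x j) : Circle) : ℂ)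
            rw [Circle.norm_coe, Complex.ofReal_one, one_mul] at h
            exact h.symm
          rw [this]
          exact hUinv _ z₀ hz₀
        have hbarcont : Continuous hbar := by
          have hc : Continuous fun x : Fin n → AddCircle (2 * Real.pi) =>
              fun j => ((AddCircle.toCircle (x j) : Circle) : ℂ) :=
            continuous_pi fun j => continuous_subtype_val.comp
              (AddCircle.continuous_toCircle.comp (continuous_apply j))
          have hgc : Continuous fun x : Fin n → AddCircle (2 * Real.pi) =>
              (((fun j => ((AddCircle.toCircle (x j) : Circle) : ℂ) * z₀ j),
                (fun j => ((AddCircle.toCircle (x j) : Circle) : ℂ) * v j)) :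
                (Fin n → ℂ) × (Fin n → ℂ)) :=
            ((continuous_pi fun j => ((continuous_apply j).comp hc).mul
              continuous_const).prodMk
              (continuous_pi fun j => ((continuous_apply j).comp hc).mul continuous_const))
          exact hKcont.comp_continuous hgc fun x => ⟨hmemU x, mem_univ _⟩
        have hbarcoe : ∀ γ : Fin n → ℝ,
            hbar (fun j => (↑(γ j) : AddCircle (2 * Real.pi))) = K (A γ z₀) (A γ v) := by
          intro γ
          rw [hhbar]
          have hcoe : ∀ j, ((AddCircle.toCircle ((↑(γ j) : AddCircle (2 * Real.pi))) : Circle) : ℂ)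
              = Complex.exp ((γ j : ℂ) * Complex.I) := by
            intro j
            rw [AddCircle.toCircle_apply_mk, Circle.coe_exp]
            congr 1
            have h2π : 2 * Real.pi ≠ 0 := by positivity
            rw [div_self h2π, one_mul]
          simp only
          congr 1
          · rw [hAapp]; funext j; rw [hcoe j]; rfl
          · rw [hAapp]; funext j; rw [hcoe j]; rfl
        calc (∫ α in torusBox n, K (A (α + β) z₀) (A (α + β) v))
            = ∫ α in torusBox n, hbar (fun j => (↑(α j + β j) : AddCircle (2 * Real.pi))) := by
              refine setIntegral_congr_fun hboxm fun α _ => ?_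
              rw [show (fun j => (↑(α j + β j) : AddCircle (2 * Real.pi))) =
                (fun j => (↑((α + β) j) : AddCircle (2 * Real.pi))) from rfl, hbarcoe (α + β)]
          _ = ∫ α in torusBox n, hbar (fun j => (↑(α j) : AddCircle (2 * Real.pi))) :=
              torus_integral_translate hbar hbarcont β
          _ = ∫ α in torusBox n, K (A α z₀) (A α v) := by
              refine setIntegral_congr_fun hboxm fun α _ => ?_
              rw [hbarcoe α]
      rw [hiff, sub_self]
    rw [hΦ]
    have : HasFDerivAt (fun x => ∫ α in torusBox n, F x α) 0 z₀ := hzero ▸ Hmain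
    have heqΦ : (fun w => ∫ α in torusBox n, L (χ (rotAct α w), χ fun j => lam j * rotAct α w j))
        = fun x => ∫ α in torusBox n, F x α := by
      funext x
      rw [← hΦF x, hΦ]
    rw [heqΦ]
    exact this
  -- local constancy
  have hloc : ∀ w ∈ U, ∃ ε > 0, ball w ε ⊆ U ∧ ∀ y ∈ ball w ε, Φ y = Φ w := by
    intro w hw
    obtain ⟨ε, εpos, hsub⟩ := Metric.isOpen_iff.1 hUopen w hw
    refine ⟨ε, εpos, hsub, fun y hy => ?_⟩
    have hdiff : DifferentiableOn ℝ Φ (ball w ε) := fun x hx =>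
      ((hderiv x (hsub hx)).differentiableAt).differentiableWithinAt
    exact Convex.is_const_of_fderivWithin_eq_zero (convex_ball w ε) hdiff
      (fun x hx => by
        rw [fderivWithin_of_isOpen isOpen_ball hx]
        exact (hderiv x (hsub hx)).fderiv)
      hy (mem_ball_self εpos)
  have hconst : ∀ w ∈ U, Φ w = Φ 0 := by
    haveI : ConnectedSpace U := Subtype.connectedSpace hUconn
    have hlc : IsLocallyConstant fun w : U => Φ ↑w := by
      rw [IsLocallyConstant.iff_exists_open]
      intro x
      obtain ⟨ε, εpos, hsub, hc⟩ := hloc x x.2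
      refine ⟨Subtype.val ⁻¹' ball (x : Fin n → ℂ) ε,
        isOpen_ball.preimage continuous_subtype_val, mem_ball_self εpos, fun y hy => ?_⟩
      exact hc y hy
    intro w hw
    exact hlc.apply_eq_of_preconnectedSpace ⟨w, hw⟩ ⟨0, hU0⟩
  -- value at zero
  have hπpos : (0:ℝ) < 2 * Real.pi := by positivity
  have hΦ0 : Φ 0 = (2 * Real.pi) ^ n * L (0, 0) := by
    rw [hΦ]
    have hrw : ∀ α : Fin n → ℝ, L (χ (rotAct α (0 : Fin n → ℂ)),
        χ fun j => lam j * rotAct α (0 : Fin n → ℂ) j) = L (0, 0) := by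
      intro α
      have h1 : rotAct α (0 : Fin n → ℂ) = 0 := by funext j; simp [rotAct]
      rw [h1]
      have h2 : (fun j => lam j * (0 : Fin n → ℂ) j) = (0 : Fin n → ℂ) := by funext j; simp
      rw [h2, hχ0]
    simp only [hrw]
    rw [setIntegral_const]
    have hvol : volume (torusBox n) = ENNReal.ofReal (2 * Real.pi) ^ n := by
      rw [torusBox, volume_pi_pi]
      simp [Real.volume_Icc]
    rw [measureReal_def, hvol]
    rw [ENNReal.toReal_pow, ENNReal.toReal_ofReal hπpos.le]
    rw [smul_eq_mul]
  intro z hz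
  have : ((2 * Real.pi) ^ n)⁻¹ * Φ z = L (0, 0) := by
    rw [hconst z hz, hΦ0, ← mul_assoc, inv_mul_cancel₀ (pow_ne_zero n hπpos.ne'), one_mul]
  exact this
end

section
/- Let n ≥ 1, s = (s₁,…,sₙ) ∈ ℝⁿ, and set 𝐧 = (s₁,…,sₙ,−1) ∈ ℝ^{n+1}. Let C be the (n+1)×(n+1) real matrix whose row i, for 1 ≤ i ≤ n, has entry 1 in column n+1−i, entry s_{n+1−i} in column n+1, and zeros elsewhere, and whose last row is (s₁,…,sₙ,−1); let 𝐈 = diag(1,…,1,−1) be the (n+1)×(n+1) diagonal matrix. Then C is invertible and C · (|𝐧|² I_{n+1} − 2 𝐧 𝐧ᵀ) = |𝐧|² · 𝐈 · C, where |𝐧|² = 1 + s₁² + ⋯ + sₙ². Equivalently, C⁻¹ 𝐈 C = I_{n+1} − 2 𝐧 𝐧ᵀ/|𝐧|² is the orthogonal reflection in the hyperplane orthogonal to 𝐧. -/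
/-- The matrix `C` from the reflection law: for `1 ≤ i ≤ n` (here 0-indexed `i < n`),
row `i` has entry `1` in column `n+1−i` and entry `s_{n+1−i}` in the last column, and
the last row is `(s₁, …, sₙ, −1)`. -/
noncomputable def Cmat (n : ℕ) (s : Fin n → ℝ) : Matrix (Fin (n + 1)) (Fin (n + 1)) ℝ :=
  Matrix.of fun i j =>
    if hi : (i : ℕ) < n then
      if hj : (j : ℕ) < n then (if (j : ℕ) = n - 1 - (i : ℕ) then 1 else 0)
      else s ⟨n - 1 - (i : ℕ), by omega⟩
    else if hj : (j : ℕ) < n then s ⟨(j : ℕ), hj⟩ else -1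

/-- The normal vector `𝐧 = (s₁, …, sₙ, −1) ∈ ℝ^{n+1}`. -/
noncomputable def nrmVec (n : ℕ) (s : Fin n → ℝ) : Fin (n + 1) → ℝ :=
  fun i => if h : (i : ℕ) < n then s ⟨(i : ℕ), h⟩ else -1

/-- The diagonal matrix `𝐈 = diag(1, …, 1, −1)`. -/
noncomputable def Imat (n : ℕ) : Matrix (Fin (n + 1)) (Fin (n + 1)) ℝ :=
  Matrix.diagonal fun i => if (i : ℕ) < n then 1 else -1

noncomputable def Bmat (n : ℕ) (s : Fin n → ℝ) : Matrix (Fin (n + 1)) (Fin (n + 1)) ℝ :=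
  Matrix.of fun j k =>
    if hj : (j : ℕ) < n then
      if hk : (k : ℕ) < n then
        (if (j : ℕ) = n - 1 - (k : ℕ) then 1 else 0)
          - s ⟨(j : ℕ), hj⟩ * s ⟨n - 1 - (k : ℕ), by omega⟩ / (1 + ∑ i, s i ^ 2)
      else s ⟨(j : ℕ), hj⟩ / (1 + ∑ i, s i ^ 2)
    else if hk : (k : ℕ) < n then s ⟨n - 1 - (k : ℕ), by omega⟩ / (1 + ∑ i, s i ^ 2)
    else -1 / (1 + ∑ i, s i ^ 2)

lemma Npos (n : ℕ) (s : Fin n → ℝ) : (0:ℝ) < 1 + ∑ i, s i ^ 2 := by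
  have : (0:ℝ) ≤ ∑ i, s i ^ 2 := Finset.sum_nonneg fun i _ => sq_nonneg _
  linarith

lemma sum_delta {n : ℕ} (c : ℕ) (hc : c < n) (f : Fin n → ℝ) :
    ∑ j : Fin n, (if (j : ℕ) = c then (1:ℝ) else 0) * f j = f ⟨c, hc⟩ := by
  have h : ∀ j : Fin n, ((j : ℕ) = c) = (j = ⟨c, hc⟩) := fun j => by
    simp [Fin.ext_iff]
  simp only [h, ite_mul, one_mul, zero_mul, Finset.sum_ite_eq', Finset.mem_univ, if_pos]

lemma CB (n : ℕ) (hn : 1 ≤ n) (s : Fin n → ℝ) : Cmat n s * Bmat n s = 1 := by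
  have hN := (Npos n s).ne'
  set N := 1 + ∑ i, s i ^ 2 with hNdef
  ext i k
  rw [Matrix.mul_apply, Fin.sum_univ_castSucc]
  rcases lt_or_ge (i : ℕ) n with hi | hi
  · have hi' : n - 1 - (i : ℕ) < n := by omega
    rcases lt_or_ge (k : ℕ) n with hk | hk
    · have hk' : n - 1 - (k : ℕ) < n := by omega
      simp only [Cmat, Bmat, Matrix.of_apply, Fin.coe_castSucc, Fin.val_last,
        dif_pos hi, dif_pos hk, dif_neg (lt_irrefl n), Fin.is_lt, dite_true]
      rw [sum_delta _ hi']
      have hik : ((n - 1 - (i:ℕ) = n - 1 - (k:ℕ))) ↔ i = k := by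
        rw [Fin.ext_iff]; omega
      rcases eq_or_ne i k with h | h
      · subst h
        rw [if_pos rfl, Matrix.one_apply_eq]
        ring
      · rw [if_neg (fun hc => h (hik.mp hc)), Matrix.one_apply_ne h]
        ring
    · have hk2 : ¬ ((k : ℕ) < n) := by omega
      have hik : i ≠ k := fun h => by rw [h] at hi; omega
      simp only [Cmat, Bmat, Matrix.of_apply, Fin.coe_castSucc, Fin.val_last,
        dif_pos hi, dif_neg hk2, dif_neg (lt_irrefl n), Fin.is_lt, dite_true]
      rw [sum_delta _ hi', Matrix.one_apply_ne hik]
      ring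
  · have hi2 : ¬ ((i : ℕ) < n) := by omega
    rcases lt_or_ge (k : ℕ) n with hk | hk
    · have hk' : n - 1 - (k : ℕ) < n := by omega
      have hik : i ≠ k := fun h => by rw [h] at hi; omega
      simp only [Cmat, Bmat, Matrix.of_apply, Fin.coe_castSucc, Fin.val_last,
        dif_neg hi2, dif_pos hk, dif_neg (lt_irrefl n), Fin.is_lt, dite_true]
      rw [Matrix.one_apply_ne hik]
      have e1 : ∀ j : Fin n, s j * ((if (j:ℕ) = n - 1 - (k:ℕ) then (1:ℝ) else 0)
            - s j * s ⟨n - 1 - (k:ℕ), hk'⟩ / N)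
          = (if (j:ℕ) = n - 1 - (k:ℕ) then (1:ℝ) else 0) * s j
            - s j ^ 2 * (s ⟨n - 1 - (k:ℕ), hk'⟩ / N) := by
        intro j; ring
      rw [Finset.sum_congr rfl fun j _ => e1 j, Finset.sum_sub_distrib,
        sum_delta _ hk', ← Finset.sum_mul]
      field_simp
      ring
    · have hk2 : ¬ ((k : ℕ) < n) := by omega
      have hik : i = k := by rw [Fin.ext_iff]; omega
      simp only [Cmat, Bmat, Matrix.of_apply, Fin.coe_castSucc, Fin.val_last,
        dif_neg hi2, dif_neg hk2, dif_neg (lt_irrefl n), Fin.is_lt, dite_true]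
      rw [hik, Matrix.one_apply_eq]
      have e1 : ∀ j : Fin n, s j * (s j / N) = s j ^ 2 * (1 / N) := by
        intro j; ring
      rw [Finset.sum_congr rfl fun j _ => e1 j, ← Finset.sum_mul]
      field_simp
      ring

lemma Cv (n : ℕ) (hn : 1 ≤ n) (s : Fin n → ℝ) (i : Fin (n+1)) :
    ∑ j, Cmat n s i j * nrmVec n s j
      = if (i : ℕ) < n then 0 else 1 + ∑ j, s j ^ 2 := by
  rw [Fin.sum_univ_castSucc]
  rcases lt_or_ge (i : ℕ) n with hi | hi
  · have hi' : n - 1 - (i : ℕ) < n := by omega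
    simp only [Cmat, nrmVec, Matrix.of_apply, Fin.coe_castSucc, Fin.val_last,
      dif_pos hi, dif_neg (lt_irrefl n), Fin.is_lt, dite_true, if_pos hi]
    rw [sum_delta _ hi']
    ring
  · have hi2 : ¬ ((i : ℕ) < n) := by omega
    simp only [Cmat, nrmVec, Matrix.of_apply, Fin.coe_castSucc, Fin.val_last,
      dif_neg hi2, dif_neg (lt_irrefl n), Fin.is_lt, dite_true, if_neg hi2]
    have e1 : ∀ j : Fin n, s j * s j = s j ^ 2 := fun j => (sq (s j)).symm
    rw [Finset.sum_congr rfl fun j _ => e1 j]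
    ring

lemma eq2 (n : ℕ) (hn : 1 ≤ n) (s : Fin n → ℝ) :
    Cmat n s * ((1 + ∑ i, s i ^ 2) • (1 : Matrix (Fin (n + 1)) (Fin (n + 1)) ℝ)
        - (2 : ℝ) • Matrix.vecMulVec (nrmVec n s) (nrmVec n s))
      = (1 + ∑ i, s i ^ 2) • (Imat n * Cmat n s) := by
  set N := 1 + ∑ i, s i ^ 2 with hNdef
  ext i k
  rw [Matrix.mul_apply]
  simp only [Matrix.sub_apply, Matrix.smul_apply, Matrix.vecMulVec_apply, Matrix.one_apply,
    smul_eq_mul, Imat, Matrix.diagonal_mul]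
  have expand : ∀ j, Cmat n s i j * (N * (if j = k then (1:ℝ) else 0) - 2 * (nrmVec n s j * nrmVec n s k))
      = N * (Cmat n s i j * (if j = k then (1:ℝ) else 0)) - 2 * (Cmat n s i j * nrmVec n s j) * nrmVec n s k := by
    intro j; ring
  rw [Finset.sum_congr rfl fun j _ => expand j, Finset.sum_sub_distrib, ← Finset.mul_sum]
  have h1 : ∑ j, Cmat n s i j * (if j = k then (1:ℝ) else 0) = Cmat n s i k := by
    simp [mul_ite, Finset.sum_ite_eq']
  have h2 : ∑ j, 2 * (Cmat n s i j * nrmVec n s j) * nrmVec n s k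
      = 2 * (∑ j, Cmat n s i j * nrmVec n s j) * nrmVec n s k := by
    rw [← Finset.sum_mul, ← Finset.mul_sum]
  rw [h1, h2, Cv n hn s i]
  rcases lt_or_ge (i : ℕ) n with hi | hi
  · simp only [if_pos hi]
    ring
  · have hi2 : ¬ ((i : ℕ) < n) := by omega
    have hCv : Cmat n s i k = nrmVec n s k := by
      simp only [Cmat, nrmVec, Matrix.of_apply, dif_neg hi2]
    simp only [if_neg hi2, hCv]
    ring

/-- For `n ≥ 1` and `s ∈ ℝⁿ`, with `𝐧 = (s, −1)` and `|𝐧|² = 1 + ∑ sᵢ²`: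
the matrix `C` is invertible, `C (|𝐧|² I − 2 𝐧𝐧ᵀ) = |𝐧|² 𝐈 C`, and equivalently
`C⁻¹ 𝐈 C = I − (2/|𝐧|²) 𝐧𝐧ᵀ` is the orthogonal reflection in the hyperplane
orthogonal to `𝐧`. -/
theorem statement9 (n : ℕ) (hn : 1 ≤ n) (s : Fin n → ℝ) :
    IsUnit (Cmat n s) ∧
    Cmat n s * ((1 + ∑ i, s i ^ 2) • (1 : Matrix (Fin (n + 1)) (Fin (n + 1)) ℝ)
        - (2 : ℝ) • Matrix.vecMulVec (nrmVec n s) (nrmVec n s))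
      = (1 + ∑ i, s i ^ 2) • (Imat n * Cmat n s) ∧
    (Cmat n s)⁻¹ * Imat n * Cmat n s
      = 1 - ((1 + ∑ i, s i ^ 2)⁻¹ * 2) • Matrix.vecMulVec (nrmVec n s) (nrmVec n s) := by
  have hN := (Npos n s).ne'
  have hCB := CB n hn s
  have hBC : Bmat n s * Cmat n s = 1 := mul_eq_one_comm.mp hCB
  have hUnit : IsUnit (Cmat n s) := ⟨⟨Cmat n s, Bmat n s, hCB, hBC⟩, rfl⟩
  have hinv : (Cmat n s)⁻¹ = Bmat n s := Matrix.inv_eq_right_inv hCB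
  refine ⟨hUnit, eq2 n hn s, ?_⟩
  have h3 := congrArg (fun M => Bmat n s * M) (eq2 n hn s)
  rw [← Matrix.mul_assoc, hBC, Matrix.one_mul, Matrix.mul_smul, ← Matrix.mul_assoc] at h3
  have h4 := congrArg (fun M => (1 + ∑ i, s i ^ 2)⁻¹ • M) h3
  simp only [smul_smul, inv_mul_cancel₀ hN, one_smul] at h4
  rw [hinv, ← h4, smul_sub, smul_smul, smul_smul, inv_mul_cancel₀ hN, one_smul]
end

section
/- Let λ = (λ₁,…,λₙ) ∈ ℂⁿ with |λ_l| = 1 for all l, let f₀ ∈ ℝ, f₀ ≠ 0, let F₁,…,Fₙ ∈ ℝ, and let c be an n×n complex matrix. Define the real-valued functions χ_j(z) = Σ_{l=1}^n (c_{jl} z_l + \overline{c_{jl}} \overline{z_l}) on ℂⁿ, and let ρ⁻¹z = (λ₁⁻¹z₁,…,λₙ⁻¹zₙ). Then the torus average of the function z ↦ (1/(4f₀)) Σ_{j=1}^n (χ_j(z) − χ_j(ρ⁻¹z))² + Σ_{j=1}^n F_j (χ_j(z)² + χ_j(ρ⁻¹z)²) equals the function z ↦ (1/(2f₀)) Σ_{j,l=1}^n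 (2 − λ_l − λ_l⁻¹ + 8f₀F_j) |c_{jl}|² z_l \overline{z_l} (each coefficient 2 − λ_l − λ_l⁻¹ being real since |λ_l| = 1). -/
open MeasureTheory

/-- The torus average `⟨g⟩(z) = (2π)⁻ⁿ ∫_{[0,2π]ⁿ} g(ρ_α z) dα`. -/
noncomputable def torusAvg {n : ℕ} (g : (Fin n → ℂ) → ℂ) (z : Fin n → ℂ) : ℂ :=
  ((2 * Real.pi) ^ n)⁻¹ • ∫ α in torusBox n, g (rotAct α z)

/-- The (real-valued) linear functions `χ_j(z) = ∑_l (c_{jl} z_l + c̄_{jl} z̄_l)`. -/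
noncomputable def chiLin {n : ℕ} (c : Matrix (Fin n) (Fin n) ℂ) (j : Fin n)
    (z : Fin n → ℂ) : ℂ :=
  ∑ l, (c j l * z l + (starRingEnd ℂ) (c j l) * (starRingEnd ℂ) (z l))


open Finset


lemma torusBox_compact (n : ℕ) : IsCompact (torusBox n) :=
  isCompact_univ_pi fun _ => isCompact_Icc

lemma integOn {n : ℕ} {f : (Fin n → ℝ) → ℂ} (hf : Continuous f) :
    IntegrableOn f (torusBox n) :=
  hf.continuousOn.integrableOn_compact (torusBox_compact n)

noncomputable def eP {n : ℕ} (l : Fin n) (α : Fin n → ℝ) : ℂ :=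
  Complex.exp ((α l : ℂ) * Complex.I)

noncomputable def eM {n : ℕ} (l : Fin n) (α : Fin n → ℝ) : ℂ :=
  Complex.exp (-(α l : ℂ) * Complex.I)

lemma ceP {n : ℕ} (l : Fin n) : Continuous (eP l) := by
  unfold eP; fun_prop

lemma ceM {n : ℕ} (l : Fin n) : Continuous (eM l) := by
  unfold eM; fun_prop

lemma expPair {n : ℕ} (l m : Fin n) (ε₁ ε₂ : ℤ) (α : Fin n → ℝ) :
    Complex.exp ((ε₁:ℂ) * (α l : ℂ) * Complex.I) *
      Complex.exp ((ε₂:ℂ) * (α m : ℂ) * Complex.I)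
    = Complex.exp (∑ j, ((((if j = l then ε₁ else 0) + (if j = m then ε₂ else 0) : ℤ)):ℂ)
        * (α j : ℂ) * Complex.I) := by
  rw [← Complex.exp_add]
  congr 1
  push_cast
  simp_rw [add_mul, Finset.sum_add_distrib, ite_mul, zero_mul]
  rw [Finset.sum_ite_eq' Finset.univ l (fun j => (ε₁:ℂ) * (α j:ℂ) * Complex.I),
    Finset.sum_ite_eq' Finset.univ m (fun j => (ε₂:ℂ) * (α j:ℂ) * Complex.I)]
  simp

lemma oneDim (k : ℤ) :
    ∫ t in Set.Icc (0:ℝ) (2*Real.pi), Complex.exp ((k:ℂ) * t * Complex.I)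
      = if k = 0 then ((2*Real.pi : ℝ) : ℂ) else 0 := by
  have h2π : (0:ℝ) ≤ 2 * Real.pi := by positivity
  rw [MeasureTheory.integral_Icc_eq_integral_Ioc, ← intervalIntegral.integral_of_le h2π]
  rcases eq_or_ne k 0 with hk | hk
  · simp [hk]
  · have hc : ((k:ℂ) * Complex.I) ≠ 0 := by
      simp [Complex.ext_iff, hk]
    have h1 : ∀ t : ℝ, (k:ℂ) * t * Complex.I = ((k:ℂ) * Complex.I) * t := by
      intro t; ring
    simp_rw [h1]
    rw [integral_exp_mul_complex hc]
    have : Complex.exp ((k:ℂ) * Complex.I * (2*Real.pi)) = 1 := by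
      rw [show (k:ℂ) * Complex.I * (2*Real.pi) = (k:ℂ) * (2 * Real.pi * Complex.I) by ring]
      exact Complex.exp_int_mul_two_pi_mul_I k
    simp [this, hk]

lemma boxProd {n : ℕ} (f : Fin n → ℝ → ℂ) :
    ∫ α in torusBox n, ∏ j, f j (α j)
      = ∏ j, ∫ t in Set.Icc (0:ℝ) (2*Real.pi), f j t := by
  have hms : MeasurableSet (torusBox n) :=
    MeasurableSet.univ_pi fun _ => measurableSet_Icc
  rw [← MeasureTheory.integral_indicator hms]
  have h : (torusBox n).indicator (fun α => ∏ j, f j (α j))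
      = fun α => ∏ j, (Set.Icc (0:ℝ) (2*Real.pi)).indicator (f j) (α j) := by
    funext α
    by_cases hα : α ∈ torusBox n
    · rw [Set.indicator_of_mem hα]
      refine Finset.prod_congr rfl fun j _ => ?_
      rw [Set.indicator_of_mem (hα j (Set.mem_univ j))]
    · rw [Set.indicator_of_notMem hα]
      obtain ⟨j, hj⟩ : ∃ j, α j ∉ Set.Icc (0:ℝ) (2*Real.pi) := by
        simp only [torusBox, Set.mem_pi, Set.mem_univ, forall_true_left,
          not_forall] at hα
        exact hα
      exact (Finset.prod_eq_zero (Finset.mem_univ j)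
        (by rw [Set.indicator_of_notMem hj])).symm
  rw [h, MeasureTheory.integral_fintype_prod_volume_eq_prod]
  exact Finset.prod_congr rfl fun j _ => (MeasureTheory.integral_indicator measurableSet_Icc)

lemma keyInt {n : ℕ} (k : Fin n → ℤ) :
    ∫ α in torusBox n, Complex.exp (∑ j, (k j : ℂ) * (α j : ℂ) * Complex.I)
      = ∏ j, if k j = 0 then ((2*Real.pi : ℝ) : ℂ) else 0 := by
  simp_rw [Complex.exp_sum]
  rw [boxProd (fun j t => Complex.exp ((k j : ℂ) * (t:ℂ) * Complex.I))]
  exact Finset.prod_congr rfl fun j _ => oneDim (k j)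

lemma I_pp {n : ℕ} (l m : Fin n) : ∫ α in torusBox n, eP l α * eP m α = 0 := by
  have h : ∀ α : Fin n → ℝ, eP l α * eP m α
      = Complex.exp (∑ j, ((((if j = l then (1:ℤ) else 0) + (if j = m then 1 else 0)):ℤ):ℂ)
          * (α j : ℂ) * Complex.I) := by
    intro α
    rw [← expPair l m 1 1 α]
    simp [eP]
  simp_rw [h]
  rw [keyInt]
  refine Finset.prod_eq_zero (Finset.mem_univ l) ?_
  have : ((if l = l then (1:ℤ) else 0) + (if l = m then 1 else 0)) ≠ 0 := by
    rcases eq_or_ne l m with h' | h' <;> simp [h']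
  rw [if_neg this]

lemma I_mm {n : ℕ} (l m : Fin n) : ∫ α in torusBox n, eM l α * eM m α = 0 := by
  have h : ∀ α : Fin n → ℝ, eM l α * eM m α
      = Complex.exp (∑ j, ((((if j = l then (-1:ℤ) else 0) + (if j = m then -1 else 0)):ℤ):ℂ)
          * (α j : ℂ) * Complex.I) := by
    intro α
    rw [← expPair l m (-1) (-1) α]
    simp [eM]
  simp_rw [h]
  rw [keyInt]
  refine Finset.prod_eq_zero (Finset.mem_univ l) ?_
  have : ((if l = l then (-1:ℤ) else 0) + (if l = m then -1 else 0)) ≠ 0 := by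
    rcases eq_or_ne l m with h' | h' <;> simp [h']
  rw [if_neg this]

lemma I_pm {n : ℕ} (l m : Fin n) : ∫ α in torusBox n, eP l α * eM m α
    = if l = m then ((2*Real.pi : ℝ) : ℂ)^n else 0 := by
  have h : ∀ α : Fin n → ℝ, eP l α * eM m α
      = Complex.exp (∑ j, ((((if j = l then (1:ℤ) else 0) + (if j = m then -1 else 0)):ℤ):ℂ)
          * (α j : ℂ) * Complex.I) := by
    intro α
    rw [← expPair l m 1 (-1) α]
    simp [eP, eM]
  simp_rw [h]
  rw [keyInt]
  rcases eq_or_ne l m with h' | h'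
  · subst h'
    rw [if_pos rfl]
    have : ∀ j : Fin n, ((if j = l then (1:ℤ) else 0) + (if j = l then -1 else 0)) = 0 := by
      intro j; by_cases hj : j = l <;> simp [hj]
    simp only [this, if_pos rfl]
    simp [Finset.prod_const]
  · rw [if_neg h']
    refine Finset.prod_eq_zero (Finset.mem_univ l) ?_
    have : ((if l = l then (1:ℤ) else 0) + (if l = m then -1 else 0)) ≠ 0 := by
      simp [h']
    rw [if_neg this]

noncomputable def Lfun {n : ℕ} (a b : Fin n → ℂ) (α : Fin n → ℝ) : ℂ :=
  ∑ l, (a l * eP l α + b l * eM l α)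

lemma avgMul {n : ℕ} (a b a' b' : Fin n → ℂ) :
    ∫ α in torusBox n, Lfun a b α * Lfun a' b' α
      = ((2*Real.pi : ℝ) : ℂ)^n * ∑ l, (a l * b' l + b l * a' l) := by
  have hexp : ∀ α, Lfun a b α * Lfun a' b' α = ∑ l, ∑ m,
      (a l * a' m * (eP l α * eP m α) + a l * b' m * (eP l α * eM m α)
        + b l * a' m * (eP m α * eM l α) + b l * b' m * (eM l α * eM m α)) := by
    intro α
    rw [Lfun, Lfun, Finset.sum_mul_sum]
    exact Finset.sum_congr rfl fun l _ => Finset.sum_congr rfl fun m _ => by ring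
  simp_rw [hexp]
  have c1 : ∀ l m : Fin n, Continuous fun α : Fin n → ℝ =>
      a l * a' m * (eP l α * eP m α) :=
    fun l m => continuous_const.mul ((ceP l).mul (ceP m))
  have c2 : ∀ l m : Fin n, Continuous fun α : Fin n → ℝ =>
      a l * b' m * (eP l α * eM m α) :=
    fun l m => continuous_const.mul ((ceP l).mul (ceM m))
  have c3 : ∀ l m : Fin n, Continuous fun α : Fin n → ℝ =>
      b l * a' m * (eP m α * eM l α) :=
    fun l m => continuous_const.mul ((ceP m).mul (ceM l))
  have c4 : ∀ l m : Fin n, Continuous fun α : Fin n → ℝ =>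
      b l * b' m * (eM l α * eM m α) :=
    fun l m => continuous_const.mul ((ceM l).mul (ceM m))
  rw [MeasureTheory.integral_finset_sum _ (fun l _ => integOn (f := fun α => ∑ m,
      (a l * a' m * (eP l α * eP m α) + a l * b' m * (eP l α * eM m α)
        + b l * a' m * (eP m α * eM l α) + b l * b' m * (eM l α * eM m α)))
    (continuous_finset_sum _ fun m _ => (((c1 l m).add (c2 l m)).add (c3 l m)).add (c4 l m)))]
  have hLM : ∀ l : Fin n, (∫ α in torusBox n, ∑ m,
      (a l * a' m * (eP l α * eP m α) + a l * b' m * (eP l α * eM m α)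
        + b l * a' m * (eP m α * eM l α) + b l * b' m * (eM l α * eM m α)))
      = a l * b' l * ((2*Real.pi : ℝ) : ℂ)^n + b l * a' l * ((2*Real.pi : ℝ) : ℂ)^n := by
    intro l
    have hone : ∀ m : Fin n, (∫ α in torusBox n,
        (a l * a' m * (eP l α * eP m α) + a l * b' m * (eP l α * eM m α)
          + b l * a' m * (eP m α * eM l α) + b l * b' m * (eM l α * eM m α)))
        = a l * b' m * (if l = m then ((2*Real.pi : ℝ) : ℂ)^n else 0)
          + b l * a' m * (if m = l then ((2*Real.pi : ℝ) : ℂ)^n else 0) := by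
      intro m
      rw [MeasureTheory.integral_add (integOn (f := fun α => a l * a' m * (eP l α * eP m α)
            + a l * b' m * (eP l α * eM m α) + b l * a' m * (eP m α * eM l α))
            (((c1 l m).add (c2 l m)).add (c3 l m)))
          (integOn (c4 l m)),
        MeasureTheory.integral_add (integOn (f := fun α => a l * a' m * (eP l α * eP m α)
            + a l * b' m * (eP l α * eM m α)) ((c1 l m).add (c2 l m))) (integOn (c3 l m)),
        MeasureTheory.integral_add (integOn (c1 l m)) (integOn (c2 l m)),
        MeasureTheory.integral_const_mul, MeasureTheory.integral_const_mul,
        MeasureTheory.integral_const_mul, MeasureTheory.integral_const_mul,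
        I_pp, I_mm, I_pm, I_pm]
      ring
    rw [MeasureTheory.integral_finset_sum _ (fun m _ =>
      integOn (f := fun α =>
        (a l * a' m * (eP l α * eP m α) + a l * b' m * (eP l α * eM m α)
          + b l * a' m * (eP m α * eM l α) + b l * b' m * (eM l α * eM m α))) ((((c1 l m).add (c2 l m)).add (c3 l m)).add (c4 l m)))]
    simp_rw [hone]
    rw [Finset.sum_add_distrib]
    simp [mul_ite, Finset.sum_ite_eq, Finset.sum_ite_eq']
  simp_rw [hLM]
  rw [Finset.mul_sum]
  exact Finset.sum_congr rfl fun l _ => by ring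

lemma Lfun_sub {n : ℕ} (a b a' b' : Fin n → ℂ) (α : Fin n → ℝ) :
    Lfun a b α - Lfun a' b' α
      = Lfun (fun l => a l - a' l) (fun l => b l - b' l) α := by
  unfold Lfun
  rw [← Finset.sum_sub_distrib]
  exact Finset.sum_congr rfl fun l _ => by ring

lemma cLfun {n : ℕ} (a b : Fin n → ℂ) : Continuous (Lfun a b) := by
  unfold Lfun
  exact continuous_finset_sum _ fun l _ =>
    (continuous_const.mul (ceP l)).add (continuous_const.mul (ceM l))


/-- Let `|λ_l| = 1` for all `l`, `f₀ ≠ 0` real, `F ∈ ℝⁿ`, `c` an `n × n`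
complex matrix, `χ_j(z) = ∑_l (c_{jl} z_l + c̄_{jl} z̄_l)` and `ρ⁻¹z = (λ₁⁻¹z₁, …, λₙ⁻¹zₙ)`.
Then the torus average of
`z ↦ (1/(4f₀)) ∑_j (χ_j(z) − χ_j(ρ⁻¹z))² + ∑_j F_j (χ_j(z)² + χ_j(ρ⁻¹z)²)`
equals `z ↦ (1/(2f₀)) ∑_{j,l} (2 − λ_l − λ_l⁻¹ + 8f₀F_j)|c_{jl}|² z_l z̄_l`. -/
theorem statement11 (n : ℕ) (lam : Fin n → ℂ) (hmod : ∀ l, ‖lam l‖ = 1)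
    (f₀ : ℝ) (hf₀ : f₀ ≠ 0) (F : Fin n → ℝ) (c : Matrix (Fin n) (Fin n) ℂ) :
    ∀ z : Fin n → ℂ,
      torusAvg (fun w =>
        (1 / (4 * (f₀ : ℂ))) *
            ∑ j, (chiLin c j w - chiLin c j (fun l => (lam l)⁻¹ * w l)) ^ 2 +
          ∑ j, (F j : ℂ) *
            ((chiLin c j w) ^ 2 + (chiLin c j (fun l => (lam l)⁻¹ * w l)) ^ 2)) z
      = (1 / (2 * (f₀ : ℂ))) *
          ∑ j, ∑ l, (2 - lam l - (lam l)⁻¹ + 8 * (f₀ : ℂ) * (F j : ℂ)) *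
            (Complex.normSq (c j l) : ℂ) * (z l * (starRingEnd ℂ) (z l)) := by
  intro z
  classical
  have hlam0 : ∀ l, lam l ≠ 0 := fun l => by
    intro h
    have := hmod l
    rw [h] at this
    simpa using this
  have hlconj : ∀ l, (starRingEnd ℂ) (lam l) = (lam l)⁻¹ := by
    intro l
    rw [Complex.inv_eq_conj (by simpa using hmod l)]
  have hlconj' : ∀ l, (starRingEnd ℂ) ((lam l)⁻¹) = lam l := by
    intro l
    rw [map_inv₀, hlconj, inv_inv]
  set a : Fin n → Fin n → ℂ := fun j l => c j l * z l with ha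
  set b : Fin n → Fin n → ℂ := fun j l => (starRingEnd ℂ) (c j l) * (starRingEnd ℂ) (z l) with hb
  set a' : Fin n → Fin n → ℂ := fun j l => c j l * ((lam l)⁻¹ * z l) with ha'
  set b' : Fin n → Fin n → ℂ := fun j l => (starRingEnd ℂ) (c j l) * (lam l * (starRingEnd ℂ) (z l)) with hb'
  have hconjexp : ∀ t : ℝ, (starRingEnd ℂ) (Complex.exp ((t:ℂ) * Complex.I))
      = Complex.exp (-(t:ℂ) * Complex.I) := by
    intro t
    rw [← Complex.exp_conj]
    congr 1
    rw [map_mul, Complex.conj_ofReal, Complex.conj_I]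
    ring
  have hchi1 : ∀ (j : Fin n) (α : Fin n → ℝ), chiLin c j (rotAct α z) = Lfun (a j) (b j) α := by
    intro j α
    unfold chiLin rotAct Lfun eP eM
    refine Finset.sum_congr rfl fun l _ => ?_
    rw [map_mul, hconjexp]
    simp only [ha, hb]
    ring
  have hchi2 : ∀ (j : Fin n) (α : Fin n → ℝ),
      chiLin c j (fun l => (lam l)⁻¹ * rotAct α z l) = Lfun (a' j) (b' j) α := by
    intro j α
    unfold chiLin rotAct Lfun eP eM
    refine Finset.sum_congr rfl fun l _ => ?_
    rw [map_mul, map_mul, hconjexp, hlconj']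
    simp only [ha', hb']
    ring
  have hg : ∀ α : Fin n → ℝ,
      ((1 / (4 * (f₀ : ℂ))) *
          ∑ j, (chiLin c j (rotAct α z) - chiLin c j (fun l => (lam l)⁻¹ * rotAct α z l)) ^ 2 +
        ∑ j, (F j : ℂ) *
          ((chiLin c j (rotAct α z)) ^ 2 + (chiLin c j (fun l => (lam l)⁻¹ * rotAct α z l)) ^ 2))
      = (1 / (4 * (f₀ : ℂ))) *
          ∑ j, (Lfun (fun l => a j l - a' j l) (fun l => b j l - b' j l) α *
                Lfun (fun l => a j l - a' j l) (fun l => b j l - b' j l) α) +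
        ∑ j, (F j : ℂ) *
          ((Lfun (a j) (b j) α * Lfun (a j) (b j) α) +
           (Lfun (a' j) (b' j) α * Lfun (a' j) (b' j) α)) := by
    intro α
    congr 1
    · congr 1
      refine Finset.sum_congr rfl fun j _ => ?_
      rw [hchi1, hchi2, Lfun_sub, sq]
    · refine Finset.sum_congr rfl fun j _ => ?_
      rw [hchi1, hchi2, sq, sq]
  unfold torusAvg
  rw [MeasureTheory.integral_congr_ae (Filter.Eventually.of_forall fun α => hg α)]
  set P : ℂ := ((2 * Real.pi : ℝ) : ℂ) ^ n with hP
  have hPne : P ≠ 0 := by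
    simp only [hP]
    apply pow_ne_zero
    norm_cast
    positivity
  have hint1 : IntegrableOn (fun α => (1 / (4 * (f₀ : ℂ))) *
      ∑ j, (Lfun (fun l => a j l - a' j l) (fun l => b j l - b' j l) α *
            Lfun (fun l => a j l - a' j l) (fun l => b j l - b' j l) α)) (torusBox n) :=
    integOn (continuous_const.mul (continuous_finset_sum _ fun j _ => (cLfun _ _).mul (cLfun _ _)))
  have hint2 : IntegrableOn (fun α => ∑ j, (F j : ℂ) *
      ((Lfun (a j) (b j) α * Lfun (a j) (b j) α) +
       (Lfun (a' j) (b' j) α * Lfun (a' j) (b' j) α))) (torusBox n) :=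
    integOn (continuous_finset_sum _ fun j _ => continuous_const.mul
      (((cLfun _ _).mul (cLfun _ _)).add ((cLfun _ _).mul (cLfun _ _))))
  rw [MeasureTheory.integral_add hint1 hint2, MeasureTheory.integral_const_mul,
    MeasureTheory.integral_finset_sum _ (fun j _ => integOn (f := fun α => Lfun (fun l => a j l - a' j l) (fun l => b j l - b' j l) α *
        Lfun (fun l => a j l - a' j l) (fun l => b j l - b' j l) α)
      ((cLfun _ _).mul (cLfun _ _))),
    MeasureTheory.integral_finset_sum _ (fun j _ => integOn
      (f := fun α => (F j : ℂ) * (Lfun (a j) (b j) α * Lfun (a j) (b j) α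
        + Lfun (a' j) (b' j) α * Lfun (a' j) (b' j) α)) (continuous_const.mul
      (((cLfun _ _).mul (cLfun _ _)).add ((cLfun _ _).mul (cLfun _ _)))))]
  have hterm2 : ∀ j : Fin n, (∫ α in torusBox n, (F j : ℂ) *
      ((Lfun (a j) (b j) α * Lfun (a j) (b j) α) +
       (Lfun (a' j) (b' j) α * Lfun (a' j) (b' j) α)))
      = (F j : ℂ) * (P * ∑ l, (a j l * b j l + b j l * a j l)
          + P * ∑ l, (a' j l * b' j l + b' j l * a' j l)) := by
    intro j
    rw [MeasureTheory.integral_const_mul,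
      MeasureTheory.integral_add
        (integOn (f := fun α => Lfun (a j) (b j) α * Lfun (a j) (b j) α) ((cLfun _ _).mul (cLfun _ _)))
        (integOn (f := fun α => Lfun (a' j) (b' j) α * Lfun (a' j) (b' j) α)
          ((cLfun _ _).mul (cLfun _ _))), avgMul, avgMul]
  simp_rw [hterm2, avgMul]
  have hsmul : ∀ w : ℂ, (((2 * Real.pi) ^ n)⁻¹ : ℝ) • w = P⁻¹ * w := by
    intro w
    rw [Complex.real_smul]
    push_cast [hP]
    ring_nf
  rw [hsmul]
  have hkey : ∀ (j l : Fin n),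
      P⁻¹ * ((1 / (4 * (f₀ : ℂ))) * (P * ((a j l - a' j l) * (b j l - b' j l)
          + (b j l - b' j l) * (a j l - a' j l)))
        + (F j : ℂ) * (P * (a j l * b j l + b j l * a j l)
          + P * (a' j l * b' j l + b' j l * a' j l)))
      = (1 / (2 * (f₀ : ℂ))) * ((2 - lam l - (lam l)⁻¹ + 8 * (f₀ : ℂ) * (F j : ℂ)) *
          (Complex.normSq (c j l) : ℂ) * (z l * (starRingEnd ℂ) (z l))) := by
    intro j l
    have hcc : (Complex.normSq (c j l) : ℂ) = c j l * (starRingEnd ℂ) (c j l) :=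
      (Complex.mul_conj (c j l)).symm
    have hf₀c : (f₀ : ℂ) ≠ 0 := by exact_mod_cast hf₀
    have h1 : P⁻¹ * P = 1 := inv_mul_cancel₀ hPne
    have h2 : (lam l)⁻¹ * lam l = 1 := inv_mul_cancel₀ (hlam0 l)
    have h3 : (f₀ : ℂ) * (f₀ : ℂ)⁻¹ = 1 := mul_inv_cancel₀ hf₀c
    simp only [ha, hb, ha', hb', hcc]
    linear_combination
      ((1 / (4 * (f₀:ℂ))) * ((c j l * z l - c j l * ((lam l)⁻¹ * z l)) *
          ((starRingEnd ℂ) (c j l) * (starRingEnd ℂ) (z l)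
            - (starRingEnd ℂ) (c j l) * (lam l * (starRingEnd ℂ) (z l)))
        + ((starRingEnd ℂ) (c j l) * (starRingEnd ℂ) (z l)
            - (starRingEnd ℂ) (c j l) * (lam l * (starRingEnd ℂ) (z l))) *
          (c j l * z l - c j l * ((lam l)⁻¹ * z l)))
        + (F j : ℂ) * ((c j l * z l * ((starRingEnd ℂ) (c j l) * (starRingEnd ℂ) (z l))
            + (starRingEnd ℂ) (c j l) * (starRingEnd ℂ) (z l) * (c j l * z l))
          + (c j l * ((lam l)⁻¹ * z l) * ((starRingEnd ℂ) (c j l) * (lam l * (starRingEnd ℂ) (z l)))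
            + (starRingEnd ℂ) (c j l) * (lam l * (starRingEnd ℂ) (z l)) *
              (c j l * ((lam l)⁻¹ * z l))))) * h1
      + (1 / (2 * (f₀:ℂ)) + 2 * (F j : ℂ)) *
          (c j l * (starRingEnd ℂ) (c j l) * (z l * (starRingEnd ℂ) (z l))) * h2
      - 4 * (F j : ℂ) *
          (c j l * (starRingEnd ℂ) (c j l) * (z l * (starRingEnd ℂ) (z l))) * h3
  calc P⁻¹ * ((1 / (4 * (f₀:ℂ))) * ∑ j, (P * ∑ l, ((a j l - a' j l) * (b j l - b' j l)
          + (b j l - b' j l) * (a j l - a' j l)))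
        + ∑ j, (F j : ℂ) * (P * ∑ l, (a j l * b j l + b j l * a j l)
          + P * ∑ l, (a' j l * b' j l + b' j l * a' j l)))
      = ∑ j, ∑ l, P⁻¹ * ((1 / (4 * (f₀ : ℂ))) * (P * ((a j l - a' j l) * (b j l - b' j l)
          + (b j l - b' j l) * (a j l - a' j l)))
        + (F j : ℂ) * (P * (a j l * b j l + b j l * a j l)
          + P * (a' j l * b' j l + b' j l * a' j l))) := by
        simp only [Finset.mul_sum, mul_add, Finset.sum_add_distrib]
    _ = ∑ j, ∑ l, (1 / (2 * (f₀ : ℂ))) * ((2 - lam l - (lam l)⁻¹ + 8 * (f₀ : ℂ) * (F j : ℂ)) *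
          (Complex.normSq (c j l) : ℂ) * (z l * (starRingEnd ℂ) (z l))) :=
        Finset.sum_congr rfl fun j _ => Finset.sum_congr rfl fun l _ => hkey j l
    _ = (1 / (2 * (f₀ : ℂ))) * ∑ j, ∑ l, ((2 - lam l - (lam l)⁻¹ + 8 * (f₀ : ℂ) * (F j : ℂ)) *
          (Complex.normSq (c j l) : ℂ) * (z l * (starRingEnd ℂ) (z l))) := by
        simp only [Finset.mul_sum]
end
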